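/- Let σ > 0 and μ ∈ ℝ, and let J be a C² solution of equation (R) with m(J) < 1. Let f ∈ F satisfy D^J f = 0, and let u ∈ U satisfy equation (1.1) with u(t,·) → f in F as t ↘ 0. Then ‖u(t,·)‖_u → 0 as t → ∞. -/

import Mathlib

open Set MeasureTheory Filter

/-- The sup norm `‖f‖_u = sup_{x ∈ [0,1]} |f(x)|`. -/
noncomputable def unorm (f : ℝ → ℝ) : ℝ := ⨆ x : Set.Icc (0:ℝ) 1, |f x|

/-- Membership in the space `F`: bounded on `[0,1]` and continuous on `(0,1)`. -/
def MemF (f : ℝ → ℝ) : Prop :=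
  (∃ C, ∀ x ∈ Set.Icc (0:ℝ) 1, |f x| ≤ C) ∧ ContinuousOn f (Set.Ioo 0 1)

/-- `u(t,·) → f` in `F` as `t ↘ 0`: uniform boundedness for `t ∈ (0,1]`, pointwise
convergence on `[0,1]`, and uniform convergence on compact subsets of `(0,1)`. -/
def ConvF (u : ℝ → ℝ → ℝ) (f : ℝ → ℝ) : Prop :=
  (∃ C, ∀ t ∈ Set.Ioc (0:ℝ) 1, ∀ x ∈ Set.Icc (0:ℝ) 1, |u t x| ≤ C) ∧
  (∀ x ∈ Set.Icc (0:ℝ) 1,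
    Filter.Tendsto (fun t => u t x) (nhdsWithin 0 (Set.Ioi 0)) (nhds (f x))) ∧
  (∀ K ⊆ Set.Ioo (0:ℝ) 1, IsCompact K →
    TendstoUniformlyOn (fun t x => u t x) f (nhdsWithin 0 (Set.Ioi 0)) K)

/-- time derivative `∂_t u`. -/
noncomputable def pt (u : ℝ → ℝ → ℝ) (t x : ℝ) : ℝ := deriv (fun s => u s x) t

/-- spatial derivative `∂_x u`, taken within `[0,1]` (one-sided at the boundary). -/
noncomputable def px (u : ℝ → ℝ → ℝ) (t x : ℝ) : ℝ :=
  derivWithin (fun y => u t y) (Set.Icc 0 1) x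

/-- second spatial derivative `∂_x² u`, taken within `[0,1]`. -/
noncomputable def pxx (u : ℝ → ℝ → ℝ) (t x : ℝ) : ℝ :=
  derivWithin (fun y => px u t y) (Set.Icc 0 1) x

/-- Membership in the space `U`: `C¹` in `t`, `C²` in `x` up to and including the spatial
boundary, bounded on `(0,1] × [0,1]`, with `∂_t u`, `∂_x u`, `∂_x² u` bounded on
`[T₁,T₂] × [0,1]` for all `0 < T₁ < T₂ < ∞`. -/
def MemU (u : ℝ → ℝ → ℝ) : Prop :=
  (∀ t ∈ Set.Ioi (0:ℝ), ∀ x ∈ Set.Icc (0:ℝ) 1,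
    DifferentiableAt ℝ (fun s => u s x) t ∧
    DifferentiableWithinAt ℝ (fun y => u t y) (Set.Icc 0 1) x ∧
    DifferentiableWithinAt ℝ (fun y => px u t y) (Set.Icc 0 1) x) ∧
  ContinuousOn (fun p : ℝ × ℝ => u p.1 p.2) (Set.Ioi 0 ×ˢ Set.Icc 0 1) ∧
  ContinuousOn (fun p : ℝ × ℝ => pt u p.1 p.2) (Set.Ioi 0 ×ˢ Set.Icc 0 1) ∧
  ContinuousOn (fun p : ℝ × ℝ => px u p.1 p.2) (Set.Ioi 0 ×ˢ Set.Icc 0 1) ∧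
  ContinuousOn (fun p : ℝ × ℝ => pxx u p.1 p.2) (Set.Ioi 0 ×ˢ Set.Icc 0 1) ∧
  (∃ C, ∀ t ∈ Set.Ioc (0:ℝ) 1, ∀ x ∈ Set.Icc (0:ℝ) 1, |u t x| ≤ C) ∧
  (∀ T₁ T₂ : ℝ, 0 < T₁ → T₁ < T₂ → ∃ C, ∀ t ∈ Set.Icc T₁ T₂, ∀ x ∈ Set.Icc (0:ℝ) 1,
    |pt u t x| ≤ C ∧ |px u t x| ≤ C ∧ |pxx u t x| ≤ C)

/-- `u` satisfies equation (1.1): `∂_t u = ½ ∂_x² u + μ ∂_x u` on `(0,∞) × (0,1)`, with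
`∂_t u(t,0) = -σ ∂_x u(t,0)` and `∂_t u(t,1) = σ ∂_x u(t,1)` for `t > 0`. -/
def SatEq (μ σ : ℝ) (u : ℝ → ℝ → ℝ) : Prop :=
  (∀ t ∈ Set.Ioi (0:ℝ), ∀ x ∈ Set.Ioo (0:ℝ) 1,
    pt u t x = (1/2) * pxx u t x + μ * px u t x) ∧
  (∀ t ∈ Set.Ioi (0:ℝ),
    pt u t 0 = -σ * px u t 0 ∧ pt u t 1 = σ * px u t 1)

/-- derivative within `[0,1]` (one-sided at the boundary). -/
noncomputable def dxI (f : ℝ → ℝ) (x : ℝ) : ℝ := derivWithin f (Set.Icc 0 1) x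

/-- The matrix `B(J)` associated to `J = (J₀, J₁)`. -/
noncomputable def BJ (μ σ : ℝ) (J₀ J₁ : ℝ → ℝ) : Matrix (Fin 2) (Fin 2) ℝ :=
  !![-(2*μ*σ) + (1/2) * dxI J₀ 0, -((1/2) * dxI J₀ 1);
     (1/2) * dxI J₁ 0, 2*μ*σ - (1/2) * dxI J₁ 1]

/-- `J = (J₀,J₁)` is a `C²` solution of the Riccati-type equation (R):
`½ J'' - μ J' + B(J) J = 0` on `[0,1]`, `J(0) = (2σ,0)ᵀ`, `J(1) = (0,2σ)ᵀ`. -/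
def SolvesR (μ σ : ℝ) (J₀ J₁ : ℝ → ℝ) : Prop :=
  (∀ x ∈ Set.Icc (0:ℝ) 1,
    DifferentiableWithinAt ℝ J₀ (Set.Icc 0 1) x ∧
    DifferentiableWithinAt ℝ (dxI J₀) (Set.Icc 0 1) x ∧
    DifferentiableWithinAt ℝ J₁ (Set.Icc 0 1) x ∧
    DifferentiableWithinAt ℝ (dxI J₁) (Set.Icc 0 1) x) ∧
  ContinuousOn (dxI (dxI J₀)) (Set.Icc 0 1) ∧
  ContinuousOn (dxI (dxI J₁)) (Set.Icc 0 1) ∧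
  (∀ x ∈ Set.Icc (0:ℝ) 1,
    (1/2) * dxI (dxI J₀) x - μ * dxI J₀ x
      + BJ μ σ J₀ J₁ 0 0 * J₀ x + BJ μ σ J₀ J₁ 0 1 * J₁ x = 0 ∧
    (1/2) * dxI (dxI J₁) x - μ * dxI J₁ x
      + BJ μ σ J₀ J₁ 1 0 * J₀ x + BJ μ σ J₀ J₁ 1 1 * J₁ x = 0) ∧
  J₀ 0 = 2*σ ∧ J₁ 0 = 0 ∧ J₀ 1 = 0 ∧ J₁ 1 = 2*σ

/-- `m(J) = max(∫₀¹ |J₀|, ∫₀¹ |J₁|)`. -/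
noncomputable def mJ (J₀ J₁ : ℝ → ℝ) : ℝ :=
  max (∫ x in (0:ℝ)..1, |J₀ x|) (∫ x in (0:ℝ)..1, |J₁ x|)

/-- `μ coth μ`, interpreted as `1` at `μ = 0`. -/
noncomputable def muCoth (μ : ℝ) : ℝ :=
  if μ = 0 then 1 else μ * Real.cosh μ / Real.sinh μ

/-- Condition (1.2): `m(J) ≤ 1` if `σ ≥ μ coth μ` and `m(J) < 1` if `σ < μ coth μ`. -/
def Cond12 (μ σ : ℝ) (J₀ J₁ : ℝ → ℝ) : Prop :=
  (muCoth μ ≤ σ → mJ J₀ J₁ ≤ 1) ∧ (σ < muCoth μ → mJ J₀ J₁ < 1)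

/-- `D^J f = (f(0) - ⟨f,J₀⟩, f(1) - ⟨f,J₁⟩)ᵀ`. -/
noncomputable def DJ (J₀ J₁ : ℝ → ℝ) (f : ℝ → ℝ) : Fin 2 → ℝ :=
  ![f 0 - ∫ x in (0:ℝ)..1, f x * J₀ x, f 1 - ∫ x in (0:ℝ)..1, f x * J₁ x]


open Real

lemma second_deriv_test {h : ℝ → ℝ} {x₀ c : ℝ}
    (hd : ∀ᶠ y in nhds x₀, DifferentiableAt ℝ h y)
    (hmax : IsLocalMax h x₀) (hc : HasDerivAt (deriv h) c x₀) : c ≤ 0 := by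
  by_contra hpos
  push_neg at hpos
  have h0 : deriv h x₀ = 0 := hmax.deriv_eq_zero
  have hslope : Tendsto (slope (deriv h) x₀) (nhdsWithin x₀ (Set.Ioi x₀)) (nhds c) :=
    (hasDerivAt_iff_tendsto_slope.1 hc).mono_left
      (nhdsWithin_mono _ fun y hy => ne_of_gt hy)
  have hev : ∀ᶠ y in nhdsWithin x₀ (Set.Ioi x₀), 0 < slope (deriv h) x₀ y :=
    hslope.eventually (eventually_gt_nhds hpos)
  rw [eventually_nhdsWithin_iff] at hev
  have hall : ∀ᶠ y in nhds x₀, (y ∈ Set.Ioi x₀ → 0 < slope (deriv h) x₀ y)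
      ∧ DifferentiableAt ℝ h y ∧ h y ≤ h x₀ := hev.and (hd.and hmax)
  rcases Metric.eventually_nhds_iff.1 hall with ⟨ε, hε, hball⟩
  have hδpos : 0 < ε / 2 := by positivity
  have hmem : ∀ y ∈ Set.Icc x₀ (x₀ + ε / 2), (y ∈ Set.Ioi x₀ → 0 < slope (deriv h) x₀ y)
      ∧ DifferentiableAt ℝ h y ∧ h y ≤ h x₀ := by
    intro y hy
    apply hball
    rw [Real.dist_eq, abs_lt]
    constructor
    · linarith [hy.1]
    · linarith [hy.2]
  have hmono : StrictMonoOn h (Set.Icc x₀ (x₀ + ε / 2)) := by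
    apply strictMonoOn_of_deriv_pos (convex_Icc _ _)
    · exact fun y hy => ((hmem y hy).2.1).continuousAt.continuousWithinAt
    · intro y hy
      rw [interior_Icc] at hy
      have h1 : 0 < slope (deriv h) x₀ y :=
        (hmem y ⟨le_of_lt hy.1, le_of_lt hy.2⟩).1 hy.1
      rw [slope_def_field, h0, sub_zero] at h1
      have h2 : 0 < y - x₀ := by linarith [hy.1]
      have := mul_pos h1 h2
      rwa [div_mul_cancel₀] at this
      exact ne_of_gt h2
  have hlt := hmono (Set.left_mem_Icc.2 (by linarith)) (Set.right_mem_Icc.2 (by linarith))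
    (by linarith)
  have hle := (hmem (x₀ + ε / 2) (Set.right_mem_Icc.2 (by linarith))).2.2
  linarith

lemma rect_max_principle (μ : ℝ) (z : ℝ → ℝ → ℝ) (s T : ℝ) (hsT : s ≤ T)
    (hc : ContinuousOn (fun p : ℝ × ℝ => z p.1 p.2) (Set.Icc s T ×ˢ Set.Icc (0:ℝ) 1))
    (hdiffx : ∀ t ∈ Set.Ioc s T, ∀ x ∈ Set.Ioo (0:ℝ) 1, DifferentiableAt ℝ (z t) x)
    (hsub : ∀ t ∈ Set.Ioc s T, ∀ x ∈ Set.Ioo (0:ℝ) 1, ∃ zt zxx,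
      HasDerivAt (fun τ => z τ x) zt t ∧ HasDerivAt (deriv (z t)) zxx x ∧
      zt < (1/2) * zxx + μ * deriv (z t) x)
    (hinit : ∀ x ∈ Set.Icc (0:ℝ) 1, z s x ≤ 0)
    (hbdry : ∀ t ∈ Set.Icc s T, z t 0 ≤ 0 ∧ z t 1 ≤ 0) :
    ∀ t ∈ Set.Icc s T, ∀ x ∈ Set.Icc (0:ℝ) 1, z t x ≤ 0 := by
  have hKne : (Set.Icc s T ×ˢ Set.Icc (0:ℝ) 1).Nonempty :=
    ⟨(s, 0), ⟨Set.left_mem_Icc.2 hsT, Set.left_mem_Icc.2 zero_le_one⟩⟩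
  obtain ⟨p, hpK, hmax⟩ := (isCompact_Icc.prod isCompact_Icc).exists_isMaxOn hKne hc
  obtain ⟨t₀, x₀⟩ := p
  intro t ht x hx
  by_contra hzpos
  push_neg at hzpos
  have hmax' : ∀ q ∈ Set.Icc s T ×ˢ Set.Icc (0:ℝ) 1, z q.1 q.2 ≤ z t₀ x₀ := hmax
  have hzp : 0 < z t₀ x₀ := lt_of_lt_of_le hzpos (hmax' (t, x) ⟨ht, hx⟩)
  have ht₀ : t₀ ∈ Set.Icc s T := hpK.1
  have hx₀ : x₀ ∈ Set.Icc (0:ℝ) 1 := hpK.2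
  -- not on parabolic boundary
  have ht₀s : s < t₀ := by
    rcases eq_or_lt_of_le ht₀.1 with h | h
    · exfalso; have := hinit x₀ hx₀; rw [h] at this; linarith
    · exact h
  have hx₀0 : (0:ℝ) < x₀ := by
    rcases eq_or_lt_of_le hx₀.1 with h | h
    · exfalso; have := (hbdry t₀ ht₀).1; rw [h] at this; linarith
    · exact h
  have hx₀1 : x₀ < 1 := by
    rcases eq_or_lt_of_le hx₀.2 with h | h
    · exfalso; have := (hbdry t₀ ht₀).2; rw [← h] at this; linarith
    · exact h
  obtain ⟨zt, zxx, hzt, hzxx, hlt⟩ := hsub t₀ ⟨ht₀s, ht₀.2⟩ x₀ ⟨hx₀0, hx₀1⟩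
  -- spatial local max
  have hlocmax : IsLocalMax (z t₀) x₀ := by
    have hIoo : Set.Ioo (0:ℝ) 1 ∈ nhds x₀ := Ioo_mem_nhds hx₀0 hx₀1
    exact eventually_of_mem hIoo fun y hy => hmax' (t₀, y) ⟨ht₀, Set.Ioo_subset_Icc_self hy⟩
  have hderiv0 : deriv (z t₀) x₀ = 0 := hlocmax.deriv_eq_zero
  have hzxx_le : zxx ≤ 0 := by
    refine second_deriv_test ?_ hlocmax hzxx
    exact eventually_of_mem (Ioo_mem_nhds hx₀0 hx₀1) fun y hy => hdiffx t₀ ⟨ht₀s, ht₀.2⟩ y hy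
  -- time derivative nonneg
  have hzt_ge : 0 ≤ zt := by
    have hsl : Tendsto (slope (fun τ => z τ x₀) t₀) (nhdsWithin t₀ (Set.Iio t₀)) (nhds zt) :=
      (hasDerivAt_iff_tendsto_slope.1 hzt).mono_left
        (nhdsWithin_mono _ fun y hy => ne_of_lt hy)
    have : ∀ᶠ τ in nhdsWithin t₀ (Set.Iio t₀), 0 ≤ slope (fun τ => z τ x₀) t₀ τ := by
      filter_upwards [Ioo_mem_nhdsLT_of_mem (Set.right_mem_Ioc.2 ht₀s)] with τ hτ
      rw [slope_def_field]
      apply div_nonneg_iff.2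
      refine Or.inr ⟨?_, ?_⟩
      · have := hmax' (τ, x₀) ⟨⟨le_of_lt hτ.1, le_of_lt (lt_of_lt_of_le hτ.2 ht₀.2)⟩, hx₀⟩
        simpa using sub_nonpos.2 this
      · linarith [hτ.2]
    exact ge_of_tendsto hsl this
  rw [hderiv0] at hlt
  linarith

noncomputable def lam (μ : ℝ) : ℝ := ((π/2)^2 + μ^2)/2
noncomputable def gfun (μ x : ℝ) : ℝ := exp (-μ*x) * cos ((π/2)*(x-1/2))
noncomputable def gfun' (μ x : ℝ) : ℝ :=
  exp (-μ*x) * (-(π/2) * sin ((π/2)*(x-1/2)) - μ * cos ((π/2)*(x-1/2)))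
noncomputable def gfun'' (μ x : ℝ) : ℝ :=
  exp (-μ*x) * (-(π/2)^2 * cos ((π/2)*(x-1/2)) + 2*μ*(π/2) * sin ((π/2)*(x-1/2))
    + μ^2 * cos ((π/2)*(x-1/2)))

lemma lam_pos (μ : ℝ) : 0 < lam μ := by
  have := pi_pos
  unfold lam; positivity

lemma hasDerivAt_inner (x : ℝ) : HasDerivAt (fun y : ℝ => (π/2)*(y-1/2)) (π/2) x := by
  have h := (((hasDerivAt_id x).sub_const (1/2)).const_mul (π/2))
  simpa using h

lemma hasDerivAt_exp_part (μ x : ℝ) :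
    HasDerivAt (fun y : ℝ => exp (-μ*y)) (-μ * exp (-μ*x)) x := by
  have h1 : HasDerivAt (fun y : ℝ => -μ*y) (-μ) x := by simpa using (hasDerivAt_id x).const_mul (-μ)
  have := (Real.hasDerivAt_exp (-μ*x)).comp x h1
  simp only [Function.comp_def] at this
  refine this.congr_deriv ?_
  ring

lemma hasDerivAt_gfun (μ x : ℝ) : HasDerivAt (gfun μ) (gfun' μ x) x := by
  have hcos : HasDerivAt (fun y : ℝ => cos ((π/2)*(y-1/2)))
      (-sin ((π/2)*(x-1/2)) * (π/2)) x :=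
    (Real.hasDerivAt_cos ((π/2)*(x-1/2))).comp (h₂ := cos) x (hasDerivAt_inner x)
  have := (hasDerivAt_exp_part μ x).mul hcos
  refine this.congr_deriv ?_
  unfold gfun'
  ring

lemma hasDerivAt_gfun' (μ x : ℝ) : HasDerivAt (gfun' μ) (gfun'' μ x) x := by
  have hcos : HasDerivAt (fun y : ℝ => cos ((π/2)*(y-1/2)))
      (-sin ((π/2)*(x-1/2)) * (π/2)) x :=
    (Real.hasDerivAt_cos ((π/2)*(x-1/2))).comp (h₂ := cos) x (hasDerivAt_inner x)
  have hsin : HasDerivAt (fun y : ℝ => sin ((π/2)*(y-1/2)))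
      (cos ((π/2)*(x-1/2)) * (π/2)) x :=
    (Real.hasDerivAt_sin ((π/2)*(x-1/2))).comp (h₂ := sin) x (hasDerivAt_inner x)
  have hin : HasDerivAt (fun y : ℝ => -(π/2) * sin ((π/2)*(y-1/2)) - μ * cos ((π/2)*(y-1/2)))
      (-(π/2) * (cos ((π/2)*(x-1/2)) * (π/2)) - μ * (-sin ((π/2)*(x-1/2)) * (π/2))) x :=
    (hsin.const_mul (-(π/2))).sub (hcos.const_mul μ)
  have := (hasDerivAt_exp_part μ x).mul hin
  refine this.congr_deriv ?_
  unfold gfun''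
  ring

lemma gfun_ode (μ x : ℝ) : (1/2) * gfun'' μ x + μ * gfun' μ x = -(lam μ) * gfun μ x := by
  unfold gfun'' gfun' gfun lam
  ring

lemma gfun_cos_bounds (μ : ℝ) {x : ℝ} (hx : x ∈ Set.Icc (0:ℝ) 1) :
    (1:ℝ)/2 ≤ cos ((π/2)*(x-1/2)) := by
  have h1 : |(π/2)*(x-1/2)| ≤ 1 := by
    rw [abs_mul]
    have h0 : |x - 1/2| ≤ 1/2 := by
      rw [abs_le]; constructor
      · linarith [hx.1]
      · linarith [hx.2]
    have hπ : |π/2| ≤ 2 := by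
      rw [abs_of_pos (by linarith [pi_pos])]; linarith [pi_le_four]
    calc |π/2| * |x-1/2| ≤ 2 * (1/2) :=
          mul_le_mul hπ h0 (abs_nonneg _) (by norm_num)
      _ = 1 := by norm_num
  have h2 : ((π/2)*(x-1/2))^2 ≤ 1 := by
    rw [sq_le_one_iff_abs_le_one]; exact h1
  have := Real.one_sub_sq_div_two_le_cos (x := (π/2)*(x-1/2))
  linarith

lemma gfun_lower (μ : ℝ) {x : ℝ} (hx : x ∈ Set.Icc (0:ℝ) 1) :
    exp (-|μ|) / 2 ≤ gfun μ x := by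
  have hcos := gfun_cos_bounds μ hx
  have hexp : exp (-|μ|) ≤ exp (-μ*x) := by
    apply exp_le_exp.2
    have : μ * x ≤ |μ| := by
      calc μ * x ≤ |μ * x| := le_abs_self _
        _ = |μ| * |x| := abs_mul _ _
        _ ≤ |μ| * 1 := by
            apply mul_le_mul_of_nonneg_left _ (abs_nonneg μ)
            rw [abs_le]; exact ⟨by linarith [hx.1], hx.2⟩
        _ = |μ| := mul_one _
    linarith
  calc exp (-|μ|) / 2 = exp (-|μ|) * (1/2) := by ring
    _ ≤ exp (-μ*x) * cos ((π/2)*(x-1/2)) :=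
        mul_le_mul hexp hcos (by norm_num) (le_of_lt (exp_pos _))
    _ = gfun μ x := rfl

lemma gfun_upper (μ : ℝ) {x : ℝ} (hx : x ∈ Set.Icc (0:ℝ) 1) :
    gfun μ x ≤ exp |μ| := by
  have hexp : exp (-μ*x) ≤ exp |μ| := by
    apply exp_le_exp.2
    calc -μ*x ≤ |(-μ)*x| := le_abs_self _
      _ = |μ| * |x| := by rw [abs_mul, abs_neg]
      _ ≤ |μ| * 1 := by
          apply mul_le_mul_of_nonneg_left _ (abs_nonneg μ)
          rw [abs_le]; exact ⟨by linarith [hx.1], hx.2⟩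
      _ = |μ| := mul_one _
  calc gfun μ x = exp (-μ*x) * cos ((π/2)*(x-1/2)) := rfl
    _ ≤ exp (-μ*x) * 1 := by
        apply mul_le_mul_of_nonneg_left (cos_le_one _) (le_of_lt (exp_pos _))
    _ ≤ exp |μ| := by rw [mul_one]; exact hexp

lemma gfun_nonneg (μ : ℝ) {x : ℝ} (hx : x ∈ Set.Icc (0:ℝ) 1) : 0 ≤ gfun μ x :=
  le_trans (by positivity) (gfun_lower μ hx)

lemma gfun_continuous (μ : ℝ) : Continuous (gfun μ) := by
  unfold gfun; fun_prop
-- interior spatial derivatives are genuine derivatives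
lemma hasDerivAt_of_within {v : ℝ → ℝ → ℝ} {t x : ℝ}
    (hd : DifferentiableWithinAt ℝ (fun y => v t y) (Set.Icc 0 1) x)
    (hx : x ∈ Set.Ioo (0:ℝ) 1) : HasDerivAt (v t) (px v t x) x := by
  have hmem : Set.Icc (0:ℝ) 1 ∈ nhds x := Icc_mem_nhds hx.1 hx.2
  have := (hd.differentiableAt hmem).hasDerivAt
  rwa [show deriv (v t) x = px v t x from (derivWithin_of_mem_nhds hmem).symm] at this

lemma hasDerivAt_px_of_within {v : ℝ → ℝ → ℝ} {t x : ℝ}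
    (hd : DifferentiableWithinAt ℝ (fun y => px v t y) (Set.Icc 0 1) x)
    (hx : x ∈ Set.Ioo (0:ℝ) 1) : HasDerivAt (px v t) (pxx v t x) x := by
  have hmem : Set.Icc (0:ℝ) 1 ∈ nhds x := Icc_mem_nhds hx.1 hx.2
  have := (hd.differentiableAt hmem).hasDerivAt
  rwa [show deriv (px v t) x = pxx v t x from (derivWithin_of_mem_nhds hmem).symm] at this

lemma comparison (μ : ℝ) (v : ℝ → ℝ → ℝ)
    (hvc : ContinuousOn (fun p : ℝ × ℝ => v p.1 p.2) (Set.Ioi 0 ×ˢ Set.Icc 0 1))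
    (hvreg : ∀ t ∈ Set.Ioi (0:ℝ), ∀ x ∈ Set.Icc (0:ℝ) 1,
      DifferentiableAt ℝ (fun s => v s x) t ∧
      DifferentiableWithinAt ℝ (fun y => v t y) (Set.Icc 0 1) x ∧
      DifferentiableWithinAt ℝ (fun y => px v t y) (Set.Icc 0 1) x)
    (hvpde : ∀ t ∈ Set.Ioi (0:ℝ), ∀ x ∈ Set.Ioo (0:ℝ) 1,
      pt v t x = (1/2) * pxx v t x + μ * px v t x)
    (s T A Bc : ℝ) (hs : 0 < s) (hsT : s ≤ T) (hA : 0 ≤ A) (hB : 0 ≤ Bc)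
    (hbdry : ∀ t ∈ Set.Icc s T, v t 0 ≤ A ∧ v t 1 ≤ A)
    (hinit : ∀ x ∈ Set.Icc (0:ℝ) 1, v s x ≤ A + Bc * gfun μ x) :
    ∀ t ∈ Set.Icc s T, ∀ x ∈ Set.Icc (0:ℝ) 1,
      v t x ≤ A + Bc * exp (-(lam μ) * (t - s)) * gfun μ x := by
  have key : ∀ ε > 0, ∀ t ∈ Set.Icc s T, ∀ x ∈ Set.Icc (0:ℝ) 1,
      v t x - (A + Bc * exp (-(lam μ) * (t - s)) * gfun μ x + ε * (t - s)) ≤ 0 := by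
    intro ε hε
    set z : ℝ → ℝ → ℝ := fun τ y =>
      v τ y - (A + Bc * exp (-(lam μ) * (τ - s)) * gfun μ y + ε * (τ - s)) with hz
    have hsubset : Set.Icc s T ×ˢ Set.Icc (0:ℝ) 1 ⊆ Set.Ioi 0 ×ˢ Set.Icc (0:ℝ) 1 := by
      intro p hp
      exact ⟨lt_of_lt_of_le hs hp.1.1, hp.2⟩
    have hwcont : Continuous (fun p : ℝ × ℝ =>
        A + Bc * exp (-(lam μ) * (p.1 - s)) * gfun μ p.2 + ε * (p.1 - s)) := by
      apply Continuous.add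
      · apply Continuous.add continuous_const
        exact (continuous_const.mul
          ((Real.continuous_exp.comp ((continuous_const.mul
            (continuous_fst.sub continuous_const))))) ).mul
          ((gfun_continuous μ).comp continuous_snd)
      · exact continuous_const.mul (continuous_fst.sub continuous_const)
    apply rect_max_principle μ z s T hsT
    · exact (hvc.mono hsubset).sub hwcont.continuousOn
    · intro t ht x hx
      have ht0 : t ∈ Set.Ioi (0:ℝ) := lt_of_lt_of_le hs (le_of_lt ht.1)
      have hxI : x ∈ Set.Icc (0:ℝ) 1 := Set.Ioo_subset_Icc_self hx
      have hv := (hvreg t ht0 x hxI).2.1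
      have hmem : Set.Icc (0:ℝ) 1 ∈ nhds x := Icc_mem_nhds hx.1 hx.2
      apply DifferentiableAt.sub (hv.differentiableAt hmem)
      apply DifferentiableAt.add
      · exact (differentiableAt_const _).add
          ((differentiableAt_const _).mul (hasDerivAt_gfun μ x).differentiableAt)
      · exact differentiableAt_const _
    · -- subsolution property
      intro t ht x hx
      have ht0 : t ∈ Set.Ioi (0:ℝ) := lt_of_lt_of_le hs (le_of_lt ht.1)
      have hxI : x ∈ Set.Icc (0:ℝ) 1 := Set.Ioo_subset_Icc_self hx
      obtain ⟨hdt, hdx, hdxx⟩ := hvreg t ht0 x hxI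
      set E : ℝ := exp (-(lam μ) * (t - s)) with hE
      -- time derivative
      have hwt : HasDerivAt (fun τ => A + Bc * exp (-(lam μ) * (τ - s)) * gfun μ x + ε * (τ - s))
          (Bc * (-(lam μ) * E) * gfun μ x + ε) t := by
        have h1 : HasDerivAt (fun τ : ℝ => -(lam μ) * (τ - s)) (-(lam μ)) t := by
          simpa using ((hasDerivAt_id t).sub_const s).const_mul (-(lam μ))
        have h2 : HasDerivAt (fun τ : ℝ => exp (-(lam μ) * (τ - s))) (-(lam μ) * E) t := by
          have := (Real.hasDerivAt_exp (-(lam μ) * (t - s))).comp t h1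
          simp only [Function.comp_def] at this
          rw [hE]; refine this.congr_deriv ?_; ring
        have h3 : HasDerivAt (fun τ : ℝ => Bc * exp (-(lam μ) * (τ - s)) * gfun μ x)
            (Bc * (-(lam μ) * E) * gfun μ x) t := by
          have := (h2.const_mul Bc).mul_const (gfun μ x)
          refine this.congr_deriv ?_ <;> ring
        have h4 : HasDerivAt (fun τ : ℝ => ε * (τ - s)) ε t := by
          simpa using ((hasDerivAt_id t).sub_const s).const_mul ε
        have h5 := ((h3.const_add A).add h4)
        exact h5
      have hzt : HasDerivAt (fun τ => z τ x)
          (pt v t x - (Bc * (-(lam μ) * E) * gfun μ x + ε)) t :=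
        (hdt.hasDerivAt).sub hwt
      -- spatial derivatives of z t
      have hD : ∀ y ∈ Set.Ioo (0:ℝ) 1, HasDerivAt (z t)
          (px v t y - Bc * E * gfun' μ y) y := by
        intro y hy
        have h1 := hasDerivAt_of_within (hvreg t ht0 y (Set.Ioo_subset_Icc_self hy)).2.1 hy
        have h2 : HasDerivAt (fun y => A + Bc * E * gfun μ y + ε * (t - s))
            (Bc * E * gfun' μ y) y := by
          simpa using (((hasDerivAt_gfun μ y).const_mul (Bc * E)).const_add A).add_const (ε * (t-s))
        exact h1.sub h2
      have hderivz : deriv (z t) x = px v t x - Bc * E * gfun' μ x := (hD x hx).deriv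
      have hzxx : HasDerivAt (deriv (z t)) (pxx v t x - Bc * E * gfun'' μ x) x := by
        have hDd : HasDerivAt (fun y => px v t y - Bc * E * gfun' μ y)
            (pxx v t x - Bc * E * gfun'' μ x) x :=
          (hasDerivAt_px_of_within hdxx hx).sub ((hasDerivAt_gfun' μ x).const_mul (Bc * E))
        apply hDd.congr_of_eventuallyEq
        filter_upwards [Ioo_mem_nhds hx.1 hx.2] with y hy
        exact (hD y hy).deriv
      refine ⟨_, _, hzt, hzxx, ?_⟩
      rw [hderivz]
      have hpde := hvpde t ht0 x hx
      have hode := gfun_ode μ x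
      have hEpos : 0 < E := exp_pos _
      nlinarith [mul_le_mul_of_nonneg_left (le_of_eq hode) (mul_nonneg hB (le_of_lt hEpos))]
    · intro x hx
      have := hinit x hx
      simp only [hz, sub_self, mul_zero, neg_zero, zero_mul, Real.exp_zero, one_mul, add_zero]
      linarith
    · intro t ht
      have h0 : (0:ℝ) ∈ Set.Icc (0:ℝ) 1 := by norm_num
      have h1 : (1:ℝ) ∈ Set.Icc (0:ℝ) 1 := by norm_num
      have hE : 0 < exp (-(lam μ) * (t - s)) := exp_pos _
      have hts : 0 ≤ t - s := by linarith [ht.1]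
      constructor
      · have := (hbdry t ht).1
        have hg := gfun_nonneg μ h0
        simp only [hz]
        have e1 : 0 ≤ Bc * rexp (-lam μ * (t - s)) * gfun μ 0 :=
          mul_nonneg (mul_nonneg hB hE.le) hg
        have e2 : 0 ≤ ε * (t - s) := mul_nonneg hε.le hts
        linarith
      · have := (hbdry t ht).2
        have hg := gfun_nonneg μ h1
        simp only [hz]
        have e1 : 0 ≤ Bc * rexp (-lam μ * (t - s)) * gfun μ 1 :=
          mul_nonneg (mul_nonneg hB hE.le) hg
        have e2 : 0 ≤ ε * (t - s) := mul_nonneg hε.le hts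
        linarith
  intro t ht x hx
  by_contra hcon
  push_neg at hcon
  set δ := v t x - (A + Bc * exp (-(lam μ) * (t - s)) * gfun μ x) with hδ
  have hδpos : 0 < δ := by linarith
  have hTs : 0 < T - s + 1 := by linarith
  have := key (δ / (2 * (T - s + 1))) (by positivity) t ht x hx
  have hts : t - s ≤ T - s + 1 := by linarith [ht.2]
  have hstep : δ / (2 * (T - s + 1)) * (t - s) ≤ δ / 2 := by
    rw [div_mul_eq_mul_div, div_le_div_iff₀ (by positivity) (by norm_num)]
    nlinarith [ht.1, sub_nonneg.2 ht.1]
  linarith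
section PartB

variable {μ σ : ℝ} {J₀ J₁ : ℝ → ℝ} {f : ℝ → ℝ} {u : ℝ → ℝ → ℝ}

-- generic: derivWithin Icc is a genuine derivative at interior points
lemma hasDerivAt_of_dwa {g : ℝ → ℝ} {x : ℝ}
    (hd : DifferentiableWithinAt ℝ g (Set.Icc 0 1) x) (hx : x ∈ Set.Ioo (0:ℝ) 1) :
    HasDerivAt g (derivWithin g (Set.Icc 0 1) x) x := by
  have hmem : Set.Icc (0:ℝ) 1 ∈ nhds x := Icc_mem_nhds hx.1 hx.2
  have := (hd.differentiableAt hmem).hasDerivAt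
  rwa [← derivWithin_of_mem_nhds hmem] at this

-- slice continuity
lemma slice_cont {v : ℝ → ℝ → ℝ} {t : ℝ} (ht : t ∈ Set.Ioi (0:ℝ))
    (hc : ContinuousOn (fun p : ℝ × ℝ => v p.1 p.2) (Set.Ioi 0 ×ˢ Set.Icc 0 1)) :
    ContinuousOn (fun x => v t x) (Set.Icc (0:ℝ) 1) := by
  have h1 : ContinuousOn (fun x : ℝ => ((t, x) : ℝ × ℝ)) (Set.Icc (0:ℝ) 1) :=
    (continuous_const.prodMk continuous_id).continuousOn
  exact hc.comp h1 fun x hx => ⟨ht, hx⟩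

lemma cont_J_of_solves (hJ : SolvesR μ σ J₀ J₁) :
    ContinuousOn J₀ (Set.Icc (0:ℝ) 1) ∧ ContinuousOn J₁ (Set.Icc (0:ℝ) 1) ∧
    ContinuousOn (dxI J₀) (Set.Icc (0:ℝ) 1) ∧ ContinuousOn (dxI J₁) (Set.Icc (0:ℝ) 1) :=
  ⟨fun x hx => ((hJ.1 x hx).1).continuousWithinAt,
   fun x hx => ((hJ.1 x hx).2.2.1).continuousWithinAt,
   fun x hx => ((hJ.1 x hx).2.1).continuousWithinAt,
   fun x hx => ((hJ.1 x hx).2.2.2).continuousWithinAt⟩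

-- differentiation under the integral sign
lemma hasDerivAt_int (hU : MemU u) {t₀ : ℝ} (ht₀ : 0 < t₀) {J : ℝ → ℝ}
    (hJc : ContinuousOn J (Set.Icc (0:ℝ) 1)) :
    HasDerivAt (fun t => ∫ x in (0:ℝ)..1, u t x * J x)
      (∫ x in (0:ℝ)..1, pt u t₀ x * J x) t₀ := by
  obtain ⟨C, hC⟩ := hU.2.2.2.2.2.2 (t₀/2) (2*t₀) (by positivity) (by linarith)
  have hball : ∀ t ∈ Metric.ball t₀ (t₀/2), t ∈ Set.Ioi (0:ℝ) ∧ t ∈ Set.Icc (t₀/2) (2*t₀) := by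
    intro t htb
    rw [Metric.mem_ball, Real.dist_eq, abs_lt] at htb
    exact ⟨by simp only [Set.mem_Ioi]; linarith [htb.1],
      ⟨by linarith [htb.1], by linarith [htb.2]⟩⟩
  have hIoc : Set.uIoc (0:ℝ) 1 = Set.Ioc 0 1 := Set.uIoc_of_le (by norm_num)
  have hmeas : ∀ t ∈ Set.Ioi (0:ℝ), MeasureTheory.AEStronglyMeasurable (fun x => u t x * J x)
      (MeasureTheory.volume.restrict (Set.uIoc (0:ℝ) 1)) := by
    intro t ht
    rw [hIoc]
    exact (((slice_cont ht hU.2.1).mul hJc).mono Set.Ioc_subset_Icc_self).aestronglyMeasurable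
      measurableSet_Ioc
  have hptmeas : MeasureTheory.AEStronglyMeasurable (fun x => pt u t₀ x * J x)
      (MeasureTheory.volume.restrict (Set.uIoc (0:ℝ) 1)) := by
    rw [hIoc]
    exact (((slice_cont ht₀ hU.2.2.1).mul hJc).mono Set.Ioc_subset_Icc_self).aestronglyMeasurable
      measurableSet_Ioc
  refine (intervalIntegral.hasDerivAt_integral_of_dominated_loc_of_deriv_le
    (F := fun t x => u t x * J x) (F' := fun t x => pt u t x * J x)
    (bound := fun x => C * |J x|) (Metric.ball_mem_nhds t₀ (half_pos ht₀)) ?_ ?_ hptmeas ?_ ?_ ?_).2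
  · filter_upwards [eventually_gt_nhds ht₀] with t ht
    exact hmeas t ht
  · apply ContinuousOn.intervalIntegrable
    rw [Set.uIcc_of_le (by norm_num : (0:ℝ) ≤ 1)]
    exact (slice_cont ht₀ hU.2.1).mul hJc
  · apply MeasureTheory.ae_of_all
    intro x hxI t htb
    rw [hIoc] at hxI
    have hx : x ∈ Set.Icc (0:ℝ) 1 := Set.Ioc_subset_Icc_self hxI
    have := (hC t (hball t htb).2 x hx).1
    rw [Real.norm_eq_abs, abs_mul]
    exact mul_le_mul_of_nonneg_right this (abs_nonneg _)
  · apply ContinuousOn.intervalIntegrable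
    rw [Set.uIcc_of_le (by norm_num : (0:ℝ) ≤ 1)]
    exact continuousOn_const.mul hJc.abs
  · apply MeasureTheory.ae_of_all
    intro x hxI t htb
    rw [hIoc] at hxI
    have hx : x ∈ Set.Icc (0:ℝ) 1 := Set.Ioc_subset_Icc_self hxI
    exact ((hU.1 t (hball t htb).1 x hx).1.hasDerivAt).mul_const (J x)


lemma ae_interval_Ioo {P : ℝ → Prop} (h : ∀ x ∈ Set.Ioo (0:ℝ) 1, P x) :
    ∀ᵐ x : ℝ, x ∈ Set.uIoc (0:ℝ) 1 → P x := by
  have h1 : ∀ᵐ x : ℝ, x ≠ (1:ℝ) := by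
    rw [MeasureTheory.ae_iff]
    have : {x : ℝ | ¬x ≠ 1} = {(1:ℝ)} := by ext x; simp
    rw [this]
    exact Real.volume_singleton
  filter_upwards [h1] with x hx hxI
  rw [Set.uIoc_of_le (by norm_num : (0:ℝ) ≤ 1)] at hxI
  exact h x ⟨hxI.1, lt_of_le_of_ne hxI.2 hx⟩

lemma ibp (hU : MemU u) (hEq : SatEq μ σ u) {t : ℝ} (ht : t ∈ Set.Ioi (0:ℝ)) {J : ℝ → ℝ}
    (hJd : ∀ x ∈ Set.Icc (0:ℝ) 1, DifferentiableWithinAt ℝ J (Set.Icc 0 1) x)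
    (hJd2 : ∀ x ∈ Set.Icc (0:ℝ) 1, DifferentiableWithinAt ℝ (dxI J) (Set.Icc 0 1) x)
    (hJ2c : ContinuousOn (dxI (dxI J)) (Set.Icc (0:ℝ) 1)) :
    ∫ x in (0:ℝ)..1, pt u t x * J x =
      ((1/2) * (px u t 1 * J 1 - u t 1 * dxI J 1)
        - (1/2) * (px u t 0 * J 0 - u t 0 * dxI J 0))
      + (μ * (u t 1 * J 1) - μ * (u t 0 * J 0))
      + ((1/2) * (∫ x in (0:ℝ)..1, u t x * dxI (dxI J) x)
         - μ * (∫ x in (0:ℝ)..1, u t x * dxI J x)) := by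
  have huIcc : Set.uIcc (0:ℝ) 1 = Set.Icc 0 1 := Set.uIcc_of_le (by norm_num)
  have hu := slice_cont ht hU.2.1
  have hpx := slice_cont ht hU.2.2.2.1
  have hpxx := slice_cont ht hU.2.2.2.2.1
  have hJc : ContinuousOn J (Set.Icc (0:ℝ) 1) := fun x hx => (hJd x hx).continuousWithinAt
  have hJ'c : ContinuousOn (dxI J) (Set.Icc (0:ℝ) 1) :=
    fun x hx => (hJd2 x hx).continuousWithinAt
  -- integrability
  have iA : IntervalIntegrable (fun x => pxx u t x * J x) MeasureTheory.volume 0 1 := by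
    apply ContinuousOn.intervalIntegrable; rw [huIcc]; exact hpxx.mul hJc
  have iB : IntervalIntegrable (fun x => u t x * dxI (dxI J) x) MeasureTheory.volume 0 1 := by
    apply ContinuousOn.intervalIntegrable; rw [huIcc]; exact hu.mul hJ2c
  have iC : IntervalIntegrable (fun x => px u t x * J x) MeasureTheory.volume 0 1 := by
    apply ContinuousOn.intervalIntegrable; rw [huIcc]; exact hpx.mul hJc
  have iD : IntervalIntegrable (fun x => u t x * dxI J x) MeasureTheory.volume 0 1 := by
    apply ContinuousOn.intervalIntegrable; rw [huIcc]; exact hu.mul hJ'c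
  -- FTC for H = px*J - u*J'
  have eH : ∫ x in (0:ℝ)..1, (pxx u t x * J x - u t x * dxI (dxI J) x)
      = (px u t 1 * J 1 - u t 1 * dxI J 1) - (px u t 0 * J 0 - u t 0 * dxI J 0) := by
    apply intervalIntegral.integral_eq_sub_of_hasDeriv_right_of_le
      (f := fun x => px u t x * J x - u t x * dxI J x) (by norm_num)
    · exact (hpx.mul hJc).sub (hu.mul hJ'c)
    · intro x hx
      have hxI : x ∈ Set.Icc (0:ℝ) 1 := Set.Ioo_subset_Icc_self hx
      have h1 : HasDerivAt (fun y => px u t y) (pxx u t x) x :=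
        hasDerivAt_of_dwa (hU.1 t ht x hxI).2.2 hx
      have h2 : HasDerivAt J (dxI J x) x := hasDerivAt_of_dwa (hJd x hxI) hx
      have h3 : HasDerivAt (fun y => u t y) (px u t x) x :=
        hasDerivAt_of_dwa (hU.1 t ht x hxI).2.1 hx
      have h4 : HasDerivAt (dxI J) (dxI (dxI J) x) x := hasDerivAt_of_dwa (hJd2 x hxI) hx
      have := (h1.mul h2).sub (h3.mul h4)
      have heq : pxx u t x * J x + px u t x * dxI J x
          - (px u t x * dxI J x + u t x * dxI (dxI J) x)
          = pxx u t x * J x - u t x * dxI (dxI J) x := by ring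
      rw [heq] at this
      exact this.hasDerivWithinAt
    · exact iA.sub iB
  -- FTC for G = u*J
  have eG : ∫ x in (0:ℝ)..1, (px u t x * J x + u t x * dxI J x)
      = u t 1 * J 1 - u t 0 * J 0 := by
    apply intervalIntegral.integral_eq_sub_of_hasDeriv_right_of_le
      (f := fun x => u t x * J x) (by norm_num)
    · exact hu.mul hJc
    · intro x hx
      have hxI : x ∈ Set.Icc (0:ℝ) 1 := Set.Ioo_subset_Icc_self hx
      have h3 : HasDerivAt (fun y => u t y) (px u t x) x :=
        hasDerivAt_of_dwa (hU.1 t ht x hxI).2.1 hx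
      have h2 : HasDerivAt J (dxI J x) x := hasDerivAt_of_dwa (hJd x hxI) hx
      exact (h3.mul h2).hasDerivWithinAt
    · exact iC.add iD
  have e2 : ∫ x in (0:ℝ)..1, pxx u t x * J x
      = ((px u t 1 * J 1 - u t 1 * dxI J 1) - (px u t 0 * J 0 - u t 0 * dxI J 0))
        + ∫ x in (0:ℝ)..1, u t x * dxI (dxI J) x := by
    rw [intervalIntegral.integral_sub iA iB] at eH; linarith
  have e3 : ∫ x in (0:ℝ)..1, px u t x * J x
      = (u t 1 * J 1 - u t 0 * J 0) - ∫ x in (0:ℝ)..1, u t x * dxI J x := by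
    rw [intervalIntegral.integral_add iC iD] at eG; linarith
  -- use the PDE a.e.
  have ePT : ∫ x in (0:ℝ)..1, pt u t x * J x
      = ∫ x in (0:ℝ)..1, ((1/2) * (pxx u t x * J x) + μ * (px u t x * J x)) := by
    apply intervalIntegral.integral_congr_ae
    apply ae_interval_Ioo
    intro x hx
    rw [hEq.1 t ht x hx]; ring
  rw [ePT, intervalIntegral.integral_add (iA.const_mul _) (iC.const_mul _),
    intervalIntegral.integral_const_mul, intervalIntegral.integral_const_mul, e2, e3]
  ring

lemma BJ_entries (μ σ : ℝ) (J₀ J₁ : ℝ → ℝ) :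
    BJ μ σ J₀ J₁ 0 0 = -(2*μ*σ) + (1/2) * dxI J₀ 0 ∧
    BJ μ σ J₀ J₁ 0 1 = -((1/2) * dxI J₀ 1) ∧
    BJ μ σ J₀ J₁ 1 0 = (1/2) * dxI J₁ 0 ∧
    BJ μ σ J₀ J₁ 1 1 = 2*μ*σ - (1/2) * dxI J₁ 1 := by
  refine ⟨?_, ?_, ?_, ?_⟩ <;> simp [BJ]

lemma integral_R_identity (hU : MemU u) (hJ : SolvesR μ σ J₀ J₁) {t : ℝ}
    (ht : t ∈ Set.Ioi (0:ℝ)) {J Jo : ℝ → ℝ} {b b' : ℝ}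
    (hReq : ∀ x ∈ Set.Icc (0:ℝ) 1,
      (1/2) * dxI (dxI J) x - μ * dxI J x + b * J x + b' * Jo x = 0)
    (hJc : ContinuousOn J (Set.Icc (0:ℝ) 1)) (hJoc : ContinuousOn Jo (Set.Icc (0:ℝ) 1))
    (hJ'c : ContinuousOn (dxI J) (Set.Icc (0:ℝ) 1))
    (hJ2c : ContinuousOn (dxI (dxI J)) (Set.Icc (0:ℝ) 1)) :
    (1/2) * (∫ x in (0:ℝ)..1, u t x * dxI (dxI J) x)
      - μ * (∫ x in (0:ℝ)..1, u t x * dxI J x)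
    = -(b * ∫ x in (0:ℝ)..1, u t x * J x) - b' * ∫ x in (0:ℝ)..1, u t x * Jo x := by
  have huIcc : Set.uIcc (0:ℝ) 1 = Set.Icc 0 1 := Set.uIcc_of_le (by norm_num)
  have hu := slice_cont ht hU.2.1
  have i1 : IntervalIntegrable (fun x => u t x * dxI (dxI J) x) MeasureTheory.volume 0 1 := by
    apply ContinuousOn.intervalIntegrable; rw [huIcc]; exact hu.mul hJ2c
  have i2 : IntervalIntegrable (fun x => u t x * dxI J x) MeasureTheory.volume 0 1 := by
    apply ContinuousOn.intervalIntegrable; rw [huIcc]; exact hu.mul hJ'c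
  have i3 : IntervalIntegrable (fun x => u t x * J x) MeasureTheory.volume 0 1 := by
    apply ContinuousOn.intervalIntegrable; rw [huIcc]; exact hu.mul hJc
  have i4 : IntervalIntegrable (fun x => u t x * Jo x) MeasureTheory.volume 0 1 := by
    apply ContinuousOn.intervalIntegrable; rw [huIcc]; exact hu.mul hJoc
  have hcongr : ∫ x in (0:ℝ)..1, ((1/2)*(u t x * dxI (dxI J) x) - μ*(u t x * dxI J x))
      = ∫ x in (0:ℝ)..1, ((-b)*(u t x * J x) - b'*(u t x * Jo x)) := by
    apply intervalIntegral.integral_congr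
    intro x hx
    rw [huIcc] at hx
    have h := hReq x hx
    simp only
    linear_combination (u t x) * h
  rw [intervalIntegral.integral_sub ((i1.const_mul (1/2))) ((i2.const_mul μ)),
    intervalIntegral.integral_sub ((i3.const_mul (-b))) ((i4.const_mul b')),
    intervalIntegral.integral_const_mul, intervalIntegral.integral_const_mul,
    intervalIntegral.integral_const_mul, intervalIntegral.integral_const_mul] at hcongr
  linarith

lemma hasDerivAt_I0 (hU : MemU u) (hEq : SatEq μ σ u) (hJ : SolvesR μ σ J₀ J₁)
    {t : ℝ} (ht : t ∈ Set.Ioi (0:ℝ)) :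
    HasDerivAt (fun s => u s 0 - ∫ x in (0:ℝ)..1, u s x * J₀ x)
      (-(BJ μ σ J₀ J₁ 0 0 * (u t 0 - ∫ x in (0:ℝ)..1, u t x * J₀ x)
         + BJ μ σ J₀ J₁ 0 1 * (u t 1 - ∫ x in (0:ℝ)..1, u t x * J₁ x))) t := by
  obtain ⟨hB00, hB01, hB10, hB11⟩ := BJ_entries μ σ J₀ J₁
  have h0 : (0:ℝ) ∈ Set.Icc (0:ℝ) 1 := by norm_num
  have hJreg := cont_J_of_solves hJ
  have hut0 : HasDerivAt (fun s => u s 0) (pt u t 0) t := (hU.1 t ht 0 h0).1.hasDerivAt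
  have hint := hasDerivAt_int hU ht hJreg.1
  have combined := hut0.sub hint
  refine combined.congr_deriv ?_
  rw [ibp hU hEq ht (fun x hx => (hJ.1 x hx).1) (fun x hx => (hJ.1 x hx).2.1) hJ.2.1]
  have e4 := integral_R_identity hU hJ ht
    (J := J₀) (Jo := J₁) (b := BJ μ σ J₀ J₁ 0 0) (b' := BJ μ σ J₀ J₁ 0 1)
    (fun x hx => (hJ.2.2.2.1 x hx).1) hJreg.1 hJreg.2.1 hJreg.2.2.1 hJ.2.1
  have hpt0 : pt u t 0 = -σ * px u t 0 := (hEq.2 t ht).1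
  have hJ00 : J₀ 0 = 2*σ := hJ.2.2.2.2.1
  have hJ01 : J₀ 1 = 0 := hJ.2.2.2.2.2.2.1
  rw [hB00, hB01] at e4 ⊢
  rw [hpt0, hJ00, hJ01] at *
  linarith [e4]

lemma hasDerivAt_I1 (hU : MemU u) (hEq : SatEq μ σ u) (hJ : SolvesR μ σ J₀ J₁)
    {t : ℝ} (ht : t ∈ Set.Ioi (0:ℝ)) :
    HasDerivAt (fun s => u s 1 - ∫ x in (0:ℝ)..1, u s x * J₁ x)
      (-(BJ μ σ J₀ J₁ 1 0 * (u t 0 - ∫ x in (0:ℝ)..1, u t x * J₀ x)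
         + BJ μ σ J₀ J₁ 1 1 * (u t 1 - ∫ x in (0:ℝ)..1, u t x * J₁ x))) t := by
  obtain ⟨hB00, hB01, hB10, hB11⟩ := BJ_entries μ σ J₀ J₁
  have h1 : (1:ℝ) ∈ Set.Icc (0:ℝ) 1 := by norm_num
  have hJreg := cont_J_of_solves hJ
  have hut1 : HasDerivAt (fun s => u s 1) (pt u t 1) t := (hU.1 t ht 1 h1).1.hasDerivAt
  have hint := hasDerivAt_int hU ht hJreg.2.1
  have combined := hut1.sub hint
  refine combined.congr_deriv ?_
  rw [ibp hU hEq ht (fun x hx => (hJ.1 x hx).2.2.1) (fun x hx => (hJ.1 x hx).2.2.2) hJ.2.2.1]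
  have e4 := integral_R_identity hU hJ ht
    (J := J₁) (Jo := J₀) (b := BJ μ σ J₀ J₁ 1 1) (b' := BJ μ σ J₀ J₁ 1 0)
    (fun x hx => by linarith [(hJ.2.2.2.1 x hx).2]) hJreg.2.1 hJreg.1 hJreg.2.2.2 hJ.2.2.1
  have hpt1 : pt u t 1 = σ * px u t 1 := (hEq.2 t ht).2
  have hJ10 : J₁ 0 = 0 := hJ.2.2.2.2.2.1
  have hJ11 : J₁ 1 = 2*σ := hJ.2.2.2.2.2.2.2
  rw [hB10, hB11] at e4 ⊢
  rw [hpt1, hJ10, hJ11] at *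
  linarith [e4]


lemma pair_bound (b00 b01 b10 b11 X Y : ℝ) :
    max |(-(b00 * X + b01 * Y))| |(-(b10 * X + b11 * Y))|
      ≤ (|b00| + |b01| + |b10| + |b11|) * max |X| |Y| := by
  have h1 : |X| ≤ max |X| |Y| := le_max_left _ _
  have h2 : |Y| ≤ max |X| |Y| := le_max_right _ _
  have hM : 0 ≤ max |X| |Y| := le_trans (abs_nonneg _) h1
  apply max_le
  · rw [abs_neg]
    calc |b00 * X + b01 * Y| ≤ |b00 * X| + |b01 * Y| := abs_add_le _ _
      _ = |b00| * |X| + |b01| * |Y| := by rw [abs_mul, abs_mul]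
      _ ≤ (|b00| + |b01| + |b10| + |b11|) * max |X| |Y| := by
          nlinarith [abs_nonneg b00, abs_nonneg b01, abs_nonneg b10, abs_nonneg b11]
  · rw [abs_neg]
    calc |b10 * X + b11 * Y| ≤ |b10 * X| + |b11 * Y| := abs_add_le _ _
      _ = |b10| * |X| + |b11| * |Y| := by rw [abs_mul, abs_mul]
      _ ≤ (|b00| + |b01| + |b10| + |b11|) * max |X| |Y| := by
          nlinarith [abs_nonneg b00, abs_nonneg b01, abs_nonneg b10, abs_nonneg b11]

lemma tendsto_int_f (hU : MemU u) (hconv : ConvF u f) {J : ℝ → ℝ}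
    (hJc : ContinuousOn J (Set.Icc (0:ℝ) 1)) :
    Filter.Tendsto (fun s => ∫ x in (0:ℝ)..1, u s x * J x) (nhdsWithin 0 (Set.Ioi 0))
      (nhds (∫ x in (0:ℝ)..1, f x * J x)) := by
  obtain ⟨C, hC⟩ := hconv.1
  have hIoc : Set.uIoc (0:ℝ) 1 = Set.Ioc 0 1 := Set.uIoc_of_le (by norm_num)
  apply intervalIntegral.tendsto_integral_filter_of_dominated_convergence
    (bound := fun x => C * |J x|)
  · filter_upwards [self_mem_nhdsWithin] with s hs
    rw [hIoc]
    exact (((slice_cont hs hU.2.1).mul hJc).mono Set.Ioc_subset_Icc_self).aestronglyMeasurable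
      measurableSet_Ioc
  · filter_upwards [Ioc_mem_nhdsGT_of_mem (Set.left_mem_Ico.2 zero_lt_one)] with s hs
    apply MeasureTheory.ae_of_all
    intro x hx
    rw [hIoc] at hx
    rw [Real.norm_eq_abs, abs_mul]
    exact mul_le_mul_of_nonneg_right (hC s hs x (Set.Ioc_subset_Icc_self hx)) (abs_nonneg _)
  · apply ContinuousOn.intervalIntegrable
    rw [Set.uIcc_of_le (by norm_num : (0:ℝ) ≤ 1)]
    exact continuousOn_const.mul hJc.abs
  · apply MeasureTheory.ae_of_all
    intro x hx
    rw [hIoc] at hx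
    exact (hconv.2.1 x (Set.Ioc_subset_Icc_self hx)).mul_const (J x)

lemma boundary_rep (hU : MemU u) (hEq : SatEq μ σ u) (hJ : SolvesR μ σ J₀ J₁)
    (hconv : ConvF u f) (hDf : DJ J₀ J₁ f = 0) :
    ∀ t ∈ Set.Ioi (0:ℝ), u t 0 = (∫ x in (0:ℝ)..1, u t x * J₀ x)
      ∧ u t 1 = ∫ x in (0:ℝ)..1, u t x * J₁ x := by
  obtain ⟨hB00, hB01, hB10, hB11⟩ := BJ_entries μ σ J₀ J₁
  set b00 := BJ μ σ J₀ J₁ 0 0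
  set b01 := BJ μ σ J₀ J₁ 0 1
  set b10 := BJ μ σ J₀ J₁ 1 0
  set b11 := BJ μ σ J₀ J₁ 1 1
  set Ip : ℝ → ℝ × ℝ := fun s =>
    (u s 0 - ∫ x in (0:ℝ)..1, u s x * J₀ x, u s 1 - ∫ x in (0:ℝ)..1, u s x * J₁ x) with hIp
  set K : ℝ := |b00| + |b01| + |b10| + |b11| with hKdef
  have hK : 0 ≤ K := by positivity
  have hJreg := cont_J_of_solves hJ
  have hderiv : ∀ t ∈ Set.Ioi (0:ℝ), HasDerivAt Ip
      (-(b00 * (Ip t).1 + b01 * (Ip t).2), -(b10 * (Ip t).1 + b11 * (Ip t).2)) t := by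
    intro t ht
    exact (hasDerivAt_I0 hU hEq hJ ht).prodMk (hasDerivAt_I1 hU hEq hJ ht)
  have hbound : ∀ t : ℝ,
      ‖(-(b00 * (Ip t).1 + b01 * (Ip t).2), -(b10 * (Ip t).1 + b11 * (Ip t).2))‖
        ≤ K * ‖Ip t‖ + 0 := by
    intro t
    rw [add_zero, Prod.norm_def, Prod.norm_def]
    simp only [Real.norm_eq_abs]
    exact pair_bound b00 b01 b10 b11 (Ip t).1 (Ip t).2
  -- limit of Ip at 0+
  have hD0 : f 0 - (∫ x in (0:ℝ)..1, f x * J₀ x) = 0 := by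
    have := congrFun hDf 0
    simpa [DJ] using this
  have hD1 : f 1 - (∫ x in (0:ℝ)..1, f x * J₁ x) = 0 := by
    have := congrFun hDf 1
    simpa [DJ] using this
  have hlim : Filter.Tendsto Ip (nhdsWithin 0 (Set.Ioi 0)) (nhds (0 : ℝ × ℝ)) := by
    have h0 : (0:ℝ) ∈ Set.Icc (0:ℝ) 1 := by norm_num
    have h1' : (1:ℝ) ∈ Set.Icc (0:ℝ) 1 := by norm_num
    have hcomp0 := (hconv.2.1 0 h0).sub (tendsto_int_f hU hconv hJreg.1)
    have hcomp1 := (hconv.2.1 1 h1').sub (tendsto_int_f hU hconv hJreg.2.1)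
    rw [hD0] at hcomp0
    rw [hD1] at hcomp1
    exact hcomp0.prodMk_nhds hcomp1
  intro t ht
  have key : ‖Ip t‖ ≤ 0 := by
    have hev : ∀ᶠ a in nhdsWithin 0 (Set.Ioi 0), ‖Ip t‖ ≤ ‖Ip a‖ * Real.exp (K * t) := by
      filter_upwards [Ioc_mem_nhdsGT_of_mem (Set.left_mem_Ico.2 ht)] with a ha
      have hcont : ContinuousOn Ip (Set.Icc a t) := by
        intro τ hτ
        exact ((hderiv τ (lt_of_lt_of_le ha.1 hτ.1)).continuousAt).continuousWithinAt
      have hgr := norm_le_gronwallBound_of_norm_deriv_right_le (K := K) (ε := 0)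
        (δ := ‖Ip a‖) hcont
        (fun τ hτ => ((hderiv τ (lt_of_lt_of_le ha.1 hτ.1)).hasDerivWithinAt))
        (le_refl _) (fun τ _ => hbound τ)
      have := hgr t (Set.right_mem_Icc.2 ha.2)
      rw [gronwallBound_ε0] at this
      calc ‖Ip t‖ ≤ ‖Ip a‖ * Real.exp (K * (t - a)) := this
        _ ≤ ‖Ip a‖ * Real.exp (K * t) := by
            apply mul_le_mul_of_nonneg_left _ (norm_nonneg _)
            apply Real.exp_le_exp.2
            nlinarith [ha.1]
    have hlim0 : Filter.Tendsto (fun a => ‖Ip a‖ * Real.exp (K * t))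
        (nhdsWithin 0 (Set.Ioi 0)) (nhds 0) := by
      have := (hlim.norm).mul_const (Real.exp (K * t))
      simpa using this
    exact ge_of_tendsto hlim0 hev
  have hz : Ip t = 0 := norm_le_zero_iff.1 key
  have hz1 : (Ip t).1 = 0 := by rw [hz]; rfl
  have hz2 : (Ip t).2 = 0 := by rw [hz]; rfl
  simp only [hIp] at hz1 hz2
  constructor
  · linarith [hz1]
  · linarith [hz2]

end PartB

section PartD

variable {μ σ : ℝ} {J₀ J₁ : ℝ → ℝ} {f : ℝ → ℝ} {u : ℝ → ℝ → ℝ}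

lemma range_eq_image (g : ℝ → ℝ) :
    Set.range (fun x : Set.Icc (0:ℝ) 1 => |g ↑x|) = (fun y => |g y|) '' Set.Icc 0 1 := by
  ext y
  simp [Set.mem_image, Subtype.exists]

lemma phi_nonneg (g : ℝ → ℝ) : 0 ≤ unorm g :=
  Real.iSup_nonneg fun x => abs_nonneg _

lemma abs_le_phi {t : ℝ} (ht : t ∈ Set.Ioi (0:ℝ)) (hU : MemU u) {x : ℝ}
    (hx : x ∈ Set.Icc (0:ℝ) 1) : |u t x| ≤ unorm (fun y => u t y) := by
  have hbdd : BddAbove (Set.range (fun x : Set.Icc (0:ℝ) 1 => |u t ↑x|)) := by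
    rw [range_eq_image (u t)]
    exact (isCompact_Icc.image_of_continuousOn (slice_cont ht hU.2.1).abs).bddAbove
  exact le_ciSup hbdd ⟨x, hx⟩

lemma phi_le {t c : ℝ} (h : ∀ x ∈ Set.Icc (0:ℝ) 1, |u t x| ≤ c) :
    unorm (fun y => u t y) ≤ c := by
  haveI : Nonempty (Set.Icc (0:ℝ) 1) := ⟨⟨0, by norm_num⟩⟩
  exact ciSup_le fun x => h x x.2

lemma mJ_nonneg (J₀ J₁ : ℝ → ℝ) : 0 ≤ mJ J₀ J₁ := by
  unfold mJ
  have : (0:ℝ) ≤ ∫ x in (0:ℝ)..1, |J₀ x| :=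
    intervalIntegral.integral_nonneg (by norm_num) fun x _ => abs_nonneg _
  exact le_trans this (le_max_left _ _)

lemma bdry_bound {t c : ℝ} (ht : t ∈ Set.Ioi (0:ℝ)) (hU : MemU u)
    (hJ : SolvesR μ σ J₀ J₁)
    (hrep : u t 0 = (∫ x in (0:ℝ)..1, u t x * J₀ x)
      ∧ u t 1 = ∫ x in (0:ℝ)..1, u t x * J₁ x)
    (hc : ∀ x ∈ Set.Icc (0:ℝ) 1, |u t x| ≤ c) (hc0 : 0 ≤ c) :
    |u t 0| ≤ mJ J₀ J₁ * c ∧ |u t 1| ≤ mJ J₀ J₁ * c := by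
  have huIcc : Set.uIcc (0:ℝ) 1 = Set.Icc 0 1 := Set.uIcc_of_le (by norm_num)
  have hJreg := cont_J_of_solves hJ
  have hu := slice_cont ht hU.2.1
  have main : ∀ J : ℝ → ℝ, ContinuousOn J (Set.Icc (0:ℝ) 1) →
      (∫ x in (0:ℝ)..1, |J x|) ≤ mJ J₀ J₁ →
      |∫ x in (0:ℝ)..1, u t x * J x| ≤ mJ J₀ J₁ * c := by
    intro J hJc hJm
    have i1 : IntervalIntegrable (fun x => |u t x * J x|) MeasureTheory.volume 0 1 := by
      apply ContinuousOn.intervalIntegrable; rw [huIcc]; exact (hu.mul hJc).abs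
    have i2 : IntervalIntegrable (fun x => c * |J x|) MeasureTheory.volume 0 1 := by
      apply ContinuousOn.intervalIntegrable; rw [huIcc]; exact continuousOn_const.mul hJc.abs
    calc |∫ x in (0:ℝ)..1, u t x * J x| ≤ ∫ x in (0:ℝ)..1, |u t x * J x| :=
          intervalIntegral.abs_integral_le_integral_abs (by norm_num)
      _ ≤ ∫ x in (0:ℝ)..1, c * |J x| := by
          apply intervalIntegral.integral_mono_on (by norm_num) i1 i2
          intro x hx
          rw [abs_mul]
          exact mul_le_mul_of_nonneg_right (hc x hx) (abs_nonneg _)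
      _ = c * ∫ x in (0:ℝ)..1, |J x| := intervalIntegral.integral_const_mul _ _
      _ ≤ c * mJ J₀ J₁ := mul_le_mul_of_nonneg_left hJm hc0
      _ = mJ J₀ J₁ * c := mul_comm _ _
  constructor
  · rw [hrep.1]; exact main J₀ hJreg.1 (le_max_left _ _)
  · rw [hrep.2]; exact main J₁ hJreg.2.1 (le_max_right _ _)

-- the PDE structure hypotheses needed by `comparison`, for u and -u
lemma comparison_hyp_u (hU : MemU u) (hEq : SatEq μ σ u) :
    (∀ t ∈ Set.Ioi (0:ℝ), ∀ x ∈ Set.Icc (0:ℝ) 1,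
      DifferentiableAt ℝ (fun s => u s x) t ∧
      DifferentiableWithinAt ℝ (fun y => u t y) (Set.Icc 0 1) x ∧
      DifferentiableWithinAt ℝ (fun y => px u t y) (Set.Icc 0 1) x) ∧
    (∀ t ∈ Set.Ioi (0:ℝ), ∀ x ∈ Set.Ioo (0:ℝ) 1,
      pt u t x = (1/2) * pxx u t x + μ * px u t x) :=
  ⟨hU.1, hEq.1⟩

lemma px_neg {t x : ℝ} (hx : x ∈ Set.Icc (0:ℝ) 1) :
    px (fun τ y => -u τ y) t x = -px u t x := by
  unfold px
  rw [derivWithin.fun_neg]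

lemma comparison_hyp_neg (hU : MemU u) (hEq : SatEq μ σ u) :
    (ContinuousOn (fun p : ℝ × ℝ => -u p.1 p.2) (Set.Ioi 0 ×ˢ Set.Icc 0 1)) ∧
    (∀ t ∈ Set.Ioi (0:ℝ), ∀ x ∈ Set.Icc (0:ℝ) 1,
      DifferentiableAt ℝ (fun s => -u s x) t ∧
      DifferentiableWithinAt ℝ (fun y => -u t y) (Set.Icc 0 1) x ∧
      DifferentiableWithinAt ℝ (fun y => px (fun τ z => -u τ z) t y) (Set.Icc 0 1) x) ∧
    (∀ t ∈ Set.Ioi (0:ℝ), ∀ x ∈ Set.Ioo (0:ℝ) 1,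
      pt (fun τ z => -u τ z) t x
        = (1/2) * pxx (fun τ z => -u τ z) t x + μ * px (fun τ z => -u τ z) t x) := by
  refine ⟨hU.2.1.neg, ?_, ?_⟩
  · intro t ht x hx
    refine ⟨((hU.1 t ht x hx).1).neg, ((hU.1 t ht x hx).2.1).neg, ?_⟩
    have := ((hU.1 t ht x hx).2.2).neg
    apply this.congr
    · intro y hy; exact (px_neg hy)
    · exact px_neg hx
  · intro t ht x hx
    have hxI : x ∈ Set.Icc (0:ℝ) 1 := Set.Ioo_subset_Icc_self hx
    have hpt : pt (fun τ z => -u τ z) t x = -pt u t x := by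
      unfold pt
      exact deriv.neg
    have hpxx : pxx (fun τ z => -u τ z) t x = -pxx u t x := by
      unfold pxx
      rw [← derivWithin.neg]
      apply derivWithin_congr
      · intro y hy; exact px_neg hy
      · exact px_neg hxI
    rw [hpt, hpxx, px_neg hxI, hEq.1 t ht x hx]
    ring

end PartD

section Main

variable {μ σ : ℝ} {J₀ J₁ : ℝ → ℝ} {f : ℝ → ℝ} {u : ℝ → ℝ → ℝ}

lemma main_est (hU : MemU u) (hEq : SatEq μ σ u) (hJ : SolvesR μ σ J₀ J₁)
    (hconv : ConvF u f) (hDf : DJ J₀ J₁ f = 0)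
    {s T M : ℝ} (hs : 0 < s) (hsT : s ≤ T) (hM0 : 0 ≤ M)
    (hM : ∀ τ ∈ Set.Icc s T, ∀ x ∈ Set.Icc (0:ℝ) 1, |u τ x| ≤ M) :
    ∀ t ∈ Set.Icc s T, ∀ x ∈ Set.Icc (0:ℝ) 1,
      |u t x| ≤ mJ J₀ J₁ * M + (unorm (fun y => u s y) / (Real.exp (-|μ|)/2))
        * Real.exp (-(lam μ) * (t - s)) * Real.exp |μ| := by
  have hc0pos : 0 < Real.exp (-|μ|)/2 := by positivity
  set c0 := Real.exp (-|μ|)/2 with hc0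
  set φs := unorm (fun y => u s y) with hφs
  have hφs0 : 0 ≤ φs := phi_nonneg _
  set A := mJ J₀ J₁ * M with hA'
  set Bc := φs / c0 with hBc'
  have hA : 0 ≤ A := mul_nonneg (mJ_nonneg J₀ J₁) hM0
  have hB : 0 ≤ Bc := div_nonneg hφs0 hc0pos.le
  have hrep := boundary_rep hU hEq hJ hconv hDf
  have hbd : ∀ t ∈ Set.Icc s T, |u t 0| ≤ A ∧ |u t 1| ≤ A := by
    intro t htT
    have ht : t ∈ Set.Ioi (0:ℝ) := lt_of_lt_of_le hs htT.1
    exact bdry_bound ht hU hJ (hrep t ht) (fun x hx => hM t htT x hx) hM0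
  have hinitabs : ∀ x ∈ Set.Icc (0:ℝ) 1, |u s x| ≤ A + Bc * gfun μ x := by
    intro x hx
    have h1 : |u s x| ≤ φs := abs_le_phi (Set.mem_Ioi.2 hs) hU hx
    have h2 : φs = Bc * c0 := by
      rw [hBc']; field_simp
    have h3 : Bc * c0 ≤ Bc * gfun μ x := mul_le_mul_of_nonneg_left (gfun_lower μ hx) hB
    linarith
  have hcmpU := comparison μ u hU.2.1 hU.1 hEq.1 s T A Bc hs hsT hA hB
    (fun t ht => ⟨le_trans (le_abs_self _) (hbd t ht).1, le_trans (le_abs_self _) (hbd t ht).2⟩)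
    (fun x hx => le_trans (le_abs_self _) (hinitabs x hx))
  obtain ⟨hnc, hnreg, hnpde⟩ := comparison_hyp_neg hU hEq
  have hcmpN := comparison μ (fun τ z => -u τ z) hnc hnreg hnpde s T A Bc hs hsT hA hB
    (fun t ht => ⟨le_trans (neg_le_abs _) (hbd t ht).1, le_trans (neg_le_abs _) (hbd t ht).2⟩)
    (fun x hx => le_trans (neg_le_abs _) (hinitabs x hx))
  intro t ht x hx
  have h1 := hcmpU t ht x hx
  have h2 : -u t x ≤ A + Bc * Real.exp (-(lam μ)*(t-s)) * gfun μ x := hcmpN t ht x hx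
  have habs : |u t x| ≤ A + Bc * Real.exp (-(lam μ)*(t-s)) * gfun μ x :=
    abs_le.2 ⟨by linarith, h1⟩
  have hgU : gfun μ x ≤ Real.exp |μ| := gfun_upper μ hx
  have hE : 0 ≤ Real.exp (-(lam μ)*(t-s)) := (Real.exp_pos _).le
  have := mul_le_mul_of_nonneg_left hgU (mul_nonneg hB hE)
  calc |u t x| ≤ A + Bc * Real.exp (-(lam μ)*(t-s)) * gfun μ x := habs
    _ ≤ A + Bc * Real.exp (-(lam μ)*(t-s)) * Real.exp |μ| := by
        rw [mul_assoc, mul_assoc]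
        linarith [this]
    _ = A + Bc * Real.exp (-(lam μ)*(t-s)) * Real.exp |μ| := rfl

end Main

/-- Theorem 2.1, decay: if `J` solves (R) with `m(J) < 1` and `D^J f = 0`,
then `‖u_f(t,·)‖_u → 0` as `t → ∞`. -/
theorem stmt9 (μ σ : ℝ) (hσ : 0 < σ) (J₀ J₁ : ℝ → ℝ)
    (hJ : SolvesR μ σ J₀ J₁) (hm : mJ J₀ J₁ < 1)
    (f : ℝ → ℝ) (hf : MemF f) (hDf : DJ J₀ J₁ f = 0)
    (u : ℝ → ℝ → ℝ) (hU : MemU u) (hEq : SatEq μ σ u) (hconv : ConvF u f) :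
    Filter.Tendsto (fun t => unorm (fun x => u t x)) Filter.atTop (nhds 0) := by
  set m := mJ J₀ J₁ with hmdef
  have hm0 : 0 ≤ m := mJ_nonneg J₀ J₁
  have h1m : 0 < 1 - m := by linarith
  have hc0pos : 0 < Real.exp (-|μ|)/2 := by positivity
  set c0 : ℝ := Real.exp (-|μ|)/2 with hc0def
  set Kc : ℝ := Real.exp |μ| / c0 with hKcdef
  have hKc : 0 < Kc := by positivity
  set φ : ℝ → ℝ := fun t => unorm (fun x => u t x) with hφdef
  have hφ0 : ∀ t, 0 ≤ φ t := fun t => phi_nonneg _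
  -- global boundedness: φ t ≤ (Kc/(1-m)) * φ s for t ≥ s > 0
  have glob : ∀ s, 0 < s → ∀ t, s ≤ t → φ t ≤ (Kc/(1-m)) * φ s := by
    intro s hs t hst
    have hsubset : Set.Icc s t ×ˢ Set.Icc (0:ℝ) 1 ⊆ Set.Ioi 0 ×ˢ Set.Icc (0:ℝ) 1 :=
      fun p hp => ⟨lt_of_lt_of_le hs hp.1.1, hp.2⟩
    have hne : (Set.Icc s t ×ˢ Set.Icc (0:ℝ) 1).Nonempty :=
      ⟨(s, 0), ⟨Set.left_mem_Icc.2 hst, Set.left_mem_Icc.2 zero_le_one⟩⟩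
    obtain ⟨p, hpK, hmax⟩ := (isCompact_Icc.prod isCompact_Icc).exists_isMaxOn hne
      ((hU.2.1.mono hsubset).abs)
    have hmax' : ∀ τ ∈ Set.Icc s t, ∀ x ∈ Set.Icc (0:ℝ) 1, |u τ x| ≤ |u p.1 p.2| := by
      intro τ hτ x hx
      have := hmax (Set.mk_mem_prod hτ hx)
      simpa using this
    have hM0 : (0:ℝ) ≤ |u p.1 p.2| := abs_nonneg _
    have hest := main_est hU hEq hJ hconv hDf hs hst hM0 hmax'
    have h1 := hest p.1 hpK.1 p.2 hpK.2
    have hEle : Real.exp (-(lam μ) * (p.1 - s)) ≤ 1 := by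
      rw [Real.exp_le_one_iff]
      have := lam_pos μ
      nlinarith [hpK.1.1]
    have hKeq : φ s / c0 * Real.exp |μ| = Kc * φ s := by
      rw [hKcdef]; ring
    have hMle : |u p.1 p.2| ≤ m * |u p.1 p.2| + Kc * φ s := by
      have hb : φ s / c0 * Real.exp (-(lam μ) * (p.1 - s)) * Real.exp |μ|
          ≤ φ s / c0 * 1 * Real.exp |μ| := by
        apply mul_le_mul_of_nonneg_right _ (Real.exp_pos _).le
        exact mul_le_mul_of_nonneg_left hEle (div_nonneg (hφ0 s) hc0pos.le)
      calc |u p.1 p.2| ≤ m * |u p.1 p.2|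
            + φ s / c0 * Real.exp (-(lam μ)*(p.1-s)) * Real.exp |μ| := h1
        _ ≤ m * |u p.1 p.2| + φ s / c0 * 1 * Real.exp |μ| := by linarith
        _ = m * |u p.1 p.2| + Kc * φ s := by rw [mul_one, hKeq]
    have hMfin : |u p.1 p.2| ≤ (Kc/(1-m)) * φ s := by
      rw [div_mul_eq_mul_div, le_div_iff₀ h1m]
      nlinarith
    have hφM : φ t ≤ |u p.1 p.2| :=
      phi_le (fun x hx => hmax' t (Set.right_mem_Icc.2 hst) x hx)
    linarith
  -- refined estimate
  have refined : ∀ s, 0 < s → ∀ t, s ≤ t → ∀ Ψ, 0 ≤ Ψ → (∀ τ, s ≤ τ → φ τ ≤ Ψ) →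
      φ t ≤ m * Ψ + Kc * φ s * Real.exp (-(lam μ) * (t - s)) := by
    intro s hs t hst Ψ hΨ0 hΨ
    have hM : ∀ τ ∈ Set.Icc s t, ∀ x ∈ Set.Icc (0:ℝ) 1, |u τ x| ≤ Ψ := by
      intro τ hτ x hx
      exact le_trans (abs_le_phi (Set.mem_Ioi.2 (lt_of_lt_of_le hs hτ.1)) hU hx) (hΨ τ hτ.1)
    have hest := main_est hU hEq hJ hconv hDf hs hst hΨ0 hM t (Set.right_mem_Icc.2 hst)
    have hest2 : φ t ≤ m * Ψ + φ s / c0 * Real.exp (-(lam μ)*(t-s)) * Real.exp |μ| :=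
      phi_le (fun x hx => hest x hx)
    have heq : φ s / c0 * Real.exp (-(lam μ)*(t-s)) * Real.exp |μ|
        = Kc * φ s * Real.exp (-(lam μ)*(t-s)) := by
      rw [hKcdef]; ring
    linarith
  -- tail suprema
  set ψ : ℝ → ℝ := fun s => sSup (φ '' Set.Ici s) with hψdef
  have hψ_facts : ∀ s, 0 < s → (∀ t, s ≤ t → φ t ≤ ψ s) ∧ 0 ≤ ψ s ∧
      (∀ b, (∀ t, s ≤ t → φ t ≤ b) → ψ s ≤ b) := by
    intro s hs
    have hbdd : BddAbove (φ '' Set.Ici s) := by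
      refine ⟨(Kc/(1-m)) * φ s, ?_⟩
      rintro y ⟨t, htmem, rfl⟩
      exact glob s hs t htmem
    have hne : (φ '' Set.Ici s).Nonempty := ⟨φ s, ⟨s, le_refl s, rfl⟩⟩
    refine ⟨fun t hst => le_csSup hbdd ⟨t, hst, rfl⟩, ?_, fun b hb => csSup_le hne ?_⟩
    · exact le_trans (hφ0 s) (le_csSup hbdd ⟨s, le_refl s, rfl⟩)
    · rintro y ⟨t, htmem, rfl⟩; exact hb t htmem
  set L := sInf (ψ '' Set.Ici 1) with hLdef
  have hLbdd : BddBelow (ψ '' Set.Ici 1) := by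
    refine ⟨0, ?_⟩
    rintro y ⟨s, hs, rfl⟩
    exact (hψ_facts s (by linarith [Set.mem_Ici.1 hs])).2.1
  have hLne : (ψ '' Set.Ici 1).Nonempty := ⟨ψ 1, ⟨1, Set.mem_Ici.2 le_rfl, rfl⟩⟩
  have hL0 : 0 ≤ L := by
    apply le_csInf hLne
    rintro y ⟨s, hs, rfl⟩
    exact (hψ_facts s (by linarith [Set.mem_Ici.1 hs])).2.1
  have hkey : ∀ ε, 0 < ε → L ≤ m * (L + ε) + ε := by
    intro ε hε
    obtain ⟨y, ⟨s, hs1, rfl⟩, hylt⟩ := exists_lt_of_csInf_lt hLne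
      (show L < L + ε by linarith)
    rw [Set.mem_Ici] at hs1
    have hs0 : (0:ℝ) < s := by linarith
    have htail : ∀ᶠ r in Filter.atTop, Kc * φ s * Real.exp (-(lam μ) * (r - s)) < ε := by
      have h2 : Filter.Tendsto (fun r : ℝ => -(lam μ) * (r - s)) Filter.atTop Filter.atBot := by
        apply Filter.Tendsto.const_mul_atTop_of_neg (neg_neg_iff_pos.2 ?_ : -(lam μ) < 0)
        · exact tendsto_atTop_add_const_right _ (-s) Filter.tendsto_id
        · exact lam_pos μ
      have h3 := Real.tendsto_exp_atBot.comp h2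
      have h4 : Filter.Tendsto (fun r : ℝ => Kc * φ s * Real.exp (-(lam μ) * (r - s)))
          Filter.atTop (nhds 0) := by
        have := h3.const_mul (Kc * φ s)
        simpa [Function.comp_def] using this
      exact h4.eventually_lt_const hε
    obtain ⟨r₀, hr₀⟩ := Filter.eventually_atTop.1 htail
    set r := max r₀ (max s 1) with hrdef
    have hsr : s ≤ r := le_trans (le_max_left s 1) (le_max_right r₀ _)
    have h1r : (1:ℝ) ≤ r := le_trans (le_max_right s 1) (le_max_right r₀ _)
    have hr₀r : r₀ ≤ r := le_max_left _ _
    have hψr : ψ r ≤ m * ψ s + ε := by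
      apply (hψ_facts r (by linarith)).2.2
      intro t htr
      have h := refined s hs0 t (le_trans hsr htr) (ψ s) (hψ_facts s hs0).2.1
        (fun τ hτ => (hψ_facts s hs0).1 τ hτ)
      have hlt := hr₀ t (le_trans hr₀r htr)
      linarith
    have hLr : L ≤ ψ r := csInf_le hLbdd ⟨r, Set.mem_Ici.2 h1r, rfl⟩
    have hmψ : m * ψ s ≤ m * (L + ε) := mul_le_mul_of_nonneg_left (le_of_lt hylt) hm0
    linarith
  have hLz : L = 0 := by
    by_contra hne0
    have hLpos : 0 < L := lt_of_le_of_ne hL0 (Ne.symm hne0)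
    have hmp : (0:ℝ) < m + 1 := by linarith
    have hεpos : 0 < (1-m)*L/(2*(m+1)) := by positivity
    have hδeq : (m+1)*((1-m)*L/(2*(m+1))) = (1-m)*L/2 := by field_simp
    have := hkey _ hεpos
    nlinarith [hδeq]
  -- conclusion
  apply Metric.tendsto_atTop.2
  intro ε hε
  obtain ⟨y, ⟨s, hs1, rfl⟩, hylt⟩ := exists_lt_of_csInf_lt hLne
    (show L < ε by rw [hLz]; exact hε)
  rw [Set.mem_Ici] at hs1
  refine ⟨s, fun t hts => ?_⟩
  rw [Real.dist_eq, sub_zero, abs_of_nonneg (hφ0 t)]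
  exact lt_of_le_of_lt ((hψ_facts s (by linarith)).1 t hts) hylt
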